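/- Fix real constants 0 < C₁ < C₂ < ∞ and a real exponent p > 3. Define f(p,t,y) = (t+y)^p − t^p − y^p − p t^{p−1} y for t > 0, y > 0. Then there exists A₂ > 0 (depending on p, C₁, C₂) such that f(p,t,y) ≥ (1/2) p C₁ y^{p−1} − A₂ y^2 for all (t,y) ∈ [C₁, C₂] × (0, ∞). -/

import Mathlib

open Real

lemma bern_aux (a b p : ℝ) (ha : 0 < a) (hb : 0 ≤ b) (hp : 1 ≤ p) :
    a ^ p + p * a ^ (p - 1) * b ≤ (a + b) ^ p := by
  have hba : (-1 : ℝ) ≤ b / a := by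
    have : (0:ℝ) ≤ b / a := by positivity
    linarith
  have h := one_add_mul_self_le_rpow_one_add hba hp
  have hap : (0:ℝ) < a ^ p := Real.rpow_pos_of_pos ha p
  have key : a ^ p * (1 + p * (b / a)) ≤ a ^ p * (1 + b / a) ^ p :=
    mul_le_mul_of_nonneg_left h hap.le
  have h1 : a ^ p * (1 + b / a) ^ p = (a + b) ^ p := by
    rw [← Real.mul_rpow ha.le (by positivity)]
    congr 1
    field_simp
  have h2 : a ^ (p - 1) = a ^ p / a := by
    rw [Real.rpow_sub ha, Real.rpow_one]
  rw [h1] at key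
  rw [h2]
  have h3 : a ^ p * (1 + p * (b / a)) = a ^ p + p * (a ^ p / a) * b := by
    field_simp
  linarith [h3 ▸ key]

lemma split_pow (x q : ℝ) (hx : 0 < x) :
    x ^ (q + 2) = x ^ q * x ^ (2:ℕ) := by
  rw [← Real.rpow_natCast x 2, ← Real.rpow_add hx]
  norm_num

theorem stmt_4 (C₁ C₂ p : ℝ) (h₁ : 0 < C₁) (h₁₂ : C₁ < C₂) (hp : 3 < p) :
    ∃ A₂ > 0, ∀ t y : ℝ, t ∈ Set.Icc C₁ C₂ → 0 < y →
      (t + y) ^ p - t ^ p - y ^ p - p * t ^ (p - 1) * y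
      ≥ (1 / 2) * p * C₁ * y ^ (p - 1) - A₂ * y ^ 2 := by
  have h₂ : 0 < C₂ := h₁.trans h₁₂
  have hC2p2 : (0:ℝ) < C₂ ^ (p - 2) := Real.rpow_pos_of_pos h₂ _
  have hC2p3 : (0:ℝ) < C₂ ^ (p - 3) := Real.rpow_pos_of_pos h₂ _
  have hp0 : (0:ℝ) < p := by linarith
  refine ⟨(2 + p) * C₂ ^ (p - 2) + (1/2) * p * C₁ * C₂ ^ (p - 3), by positivity, ?_⟩
  rintro t y ⟨ht1, ht2⟩ hy
  have ht : 0 < t := h₁.trans_le ht1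
  have hyp : (0:ℝ) ≤ y ^ (p - 1) := (Real.rpow_pos_of_pos hy _).le
  have hy2 : (0:ℝ) ≤ y ^ (2:ℕ) := by positivity
  have hn1 : (0:ℝ) ≤ C₂ ^ (p - 2) * y ^ (2:ℕ) := by positivity
  have hpn1 : (0:ℝ) ≤ p * (C₂ ^ (p - 2) * y ^ (2:ℕ)) := by positivity
  have hq : (0:ℝ) ≤ (1/2) * p * C₁ * (C₂ ^ (p - 3) * y ^ (2:ℕ)) := by positivity
  have hm1 : (0:ℝ) ≤ p * C₁ * y ^ (p - 1) := by positivity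
  rcases le_total t y with hty | hty
  · -- case t ≤ y
    have hb := bern_aux y t p hy ht.le (by linarith)
    rw [add_comm y t] at hb
    have h1 : t ^ p ≤ C₂ ^ (p - 2) * y ^ (2:ℕ) := by
      have he : t ^ p = t ^ (p - 2) * t ^ (2:ℕ) := by
        have := split_pow t (p - 2) ht
        rw [show p - 2 + 2 = p by ring] at this; exact this
      rw [he]
      exact mul_le_mul (Real.rpow_le_rpow ht.le ht2 (by linarith))
        (pow_le_pow_left₀ ht.le hty 2) (by positivity) hC2p2.le
    have h2 : p * (t ^ (p - 1) * y) ≤ p * (C₂ ^ (p - 2) * y ^ (2:ℕ)) := by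
      refine mul_le_mul_of_nonneg_left ?_ hp0.le
      have ht1' : t ^ (p - 1) = t ^ (p - 2) * t := by
        rw [show p - 1 = p - 2 + 1 by ring, Real.rpow_add ht, Real.rpow_one]
      rw [ht1', sq]
      calc t ^ (p - 2) * t * y ≤ C₂ ^ (p - 2) * y * y := by
            refine mul_le_mul_of_nonneg_right ?_ hy.le
            exact mul_le_mul (Real.rpow_le_rpow ht.le ht2 (by linarith)) hty ht.le hC2p2.le
        _ = C₂ ^ (p - 2) * (y * y) := by ring
    have h3 : p * C₁ * y ^ (p - 1) ≤ p * (y ^ (p - 1) * t) := by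
      have hc : C₁ * y ^ (p - 1) ≤ t * y ^ (p - 1) := mul_le_mul_of_nonneg_right ht1 hyp
      calc p * C₁ * y ^ (p - 1) = p * (C₁ * y ^ (p - 1)) := by ring
        _ ≤ p * (t * y ^ (p - 1)) := mul_le_mul_of_nonneg_left hc hp0.le
        _ = p * (y ^ (p - 1) * t) := by ring
    linarith [hb, h1, h2, h3]
  · -- case y ≤ t
    have hb := bern_aux t y p ht hy.le (by linarith)
    have hyC2 : y ≤ C₂ := hty.trans ht2
    have h1 : y ^ p ≤ C₂ ^ (p - 2) * y ^ (2:ℕ) := by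
      have he : y ^ p = y ^ (p - 2) * y ^ (2:ℕ) := by
        have := split_pow y (p - 2) hy
        rw [show p - 2 + 2 = p by ring] at this; exact this
      rw [he]
      exact mul_le_mul_of_nonneg_right (Real.rpow_le_rpow hy.le hyC2 (by linarith)) hy2
    have h2 : (1/2) * p * C₁ * y ^ (p - 1) ≤ (1/2) * p * C₁ * (C₂ ^ (p - 3) * y ^ (2:ℕ)) := by
      refine mul_le_mul_of_nonneg_left ?_ (by positivity)
      have he : y ^ (p - 1) = y ^ (p - 3) * y ^ (2:ℕ) := by
        have := split_pow y (p - 3) hy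
        rw [show p - 3 + 2 = p - 1 by ring] at this; exact this
      rw [he]
      exact mul_le_mul_of_nonneg_right (Real.rpow_le_rpow hy.le hyC2 (by linarith)) hy2
    linarith [hb, h1, h2]
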